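/- Approximation of the sum by rescaled variance under zero-padding: for x ∈ [0,1]^m, let D_k be the vector of length m+k consisting of √x_1,...,√x_m followed by k zeros, and let Var denote the empirical variance. Then |k·Var(D_k) − ∑_{i=1}^m x_i| ≤ 2m²/k. -/

import Mathlib

/-- Empirical (biased) variance of a vector. -/
noncomputable def empVar {n : ℕ} (y : Fin n → ℝ) : ℝ :=
  (∑ i, (y i)^2) / n - ((∑ i, y i) / n)^2

theorem sum_approx_by_rescaled_variance (m k : ℕ) (hm : 1 ≤ m) (hk : 1 ≤ k)
    (x : Fin m → ℝ) (hx : ∀ i, x i ∈ Set.Icc (0:ℝ) 1) :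
    |(k : ℝ) * empVar (Fin.append (fun i => Real.sqrt (x i)) (fun _ : Fin k => 0))
        - ∑ i, x i| ≤ 2 * m^2 / k := by
  set S : ℝ := ∑ i, x i with hS
  set T : ℝ := ∑ i, Real.sqrt (x i) with hT
  have hsum : ∑ i : Fin (m + k),
      Fin.append (fun i => Real.sqrt (x i)) (fun _ : Fin k => (0:ℝ)) i = T := by
    rw [Fin.sum_univ_add]
    simp [Fin.append_left, Fin.append_right, hT]
  have hsq : ∑ i : Fin (m + k),
      (Fin.append (fun i => Real.sqrt (x i)) (fun _ : Fin k => (0:ℝ)) i)^2 = S := by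
    rw [Fin.sum_univ_add]
    simp only [Fin.append_left, Fin.append_right]
    simp only [ne_eq, OfNat.ofNat_ne_zero, not_false_eq_true, zero_pow, Finset.sum_const_zero, add_zero, hS]
    exact Finset.sum_congr rfl fun i _ => Real.sq_sqrt (hx i).1
  have hkpos : (0:ℝ) < k := by exact_mod_cast hk
  have hmpos : (0:ℝ) < m := by exact_mod_cast hm
  have hnpos : (0:ℝ) < (m + k : ℕ) := by positivity
  have hn : ((m + k : ℕ) : ℝ) = (m : ℝ) + k := by push_cast; ring
  have hSle : S ≤ m := by
    calc S ≤ ∑ _i : Fin m, (1:ℝ) := Finset.sum_le_sum fun i _ => (hx i).2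
    _ = m := by simp
  have hS0 : 0 ≤ S := Finset.sum_nonneg fun i _ => (hx i).1
  have hTle : T ≤ m := by
    calc T ≤ ∑ _i : Fin m, (1:ℝ) := Finset.sum_le_sum fun i _ =>
        Real.sqrt_le_one.2 (hx i).2
    _ = m := by simp
  have hT0 : 0 ≤ T := Finset.sum_nonneg fun i _ => Real.sqrt_nonneg _
  rw [empVar, hsum, hsq]
  have key : (k:ℝ) * (S / (m + k : ℕ) - (T / (m + k : ℕ))^2) - S
      = -((m:ℝ) * S / (m + k : ℕ) + k * T^2 / ((m + k : ℕ))^2) := by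
    field_simp
    push_cast
    ring
  rw [key, abs_neg, abs_of_nonneg (by positivity)]
  have h1 : (m:ℝ) * S / (m + k : ℕ) ≤ m^2 / k := by
    rw [div_le_div_iff₀ hnpos hkpos, hn]
    nlinarith [mul_le_mul_of_nonneg_right (mul_le_mul_of_nonneg_left hSle hmpos.le) hkpos.le, pow_pos hmpos 3]
  have h2 : (k:ℝ) * T^2 / ((m + k : ℕ))^2 ≤ m^2 / k := by
    rw [div_le_div_iff₀ (by positivity) hkpos, hn]
    nlinarith [sq_nonneg ((m:ℝ)), mul_le_mul hTle hTle hT0 hmpos.le, mul_pos hmpos hkpos, sq_nonneg T]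
  have : 2 * (m:ℝ)^2 / k = m^2 / k + m^2 / k := by ring
  rw [this]
  exact add_le_add h1 h2
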